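/- Let τ > 0 and G ∈ B_c, and define F(x) = G(x) e^{x²/(4τ)} − G(0) − (1/(2τ)) ∫_0^x G(ξ) ξ e^{ξ²/(4τ)} dξ (this is the primitive F(x) = ∫_0^x f of the distribution f with f·ω_τ = G'). Then |F(x)| ≤ ‖G‖'_∞ e^{x²/(4τ)} for all x ∈ ℝ, and F(x) e^{−x²/(4τ)} → 0 as |x| → ∞. -/

import Mathlib

open MeasureTheory Filter Topology

/-- `G ∈ B_c`: continuous, vanishing at `−∞`, with a finite limit at `+∞`. -/
def memBc (G : ℝ → ℝ) : Prop :=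
  Continuous G ∧ Tendsto G atBot (nhds (0 : ℝ)) ∧ ∃ L : ℝ, Tendsto G atTop (nhds L)

/-- `‖G‖'_∞ = sup_{x<y} |G(x) − G(y)|`. -/
noncomputable def normBc (G : ℝ → ℝ) : ℝ :=
  sSup {r : ℝ | ∃ x y : ℝ, x < y ∧ r = |G x - G y|}

/-- The primitive `F(x) = ∫_0^x f` of the distribution `f ∈ A_{c,τ}` with `f·ω_τ = G'`:
`F(x) = G(x) e^{x²/(4τ)} − G(0) − (1/(2τ)) ∫_0^x G(ξ) ξ e^{ξ²/(4τ)} dξ`. -/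
noncomputable def wPrim (τ : ℝ) (G : ℝ → ℝ) (x : ℝ) : ℝ :=
  G x * Real.exp (x ^ 2 / (4 * τ)) - G 0 -
    (1 / (2 * τ)) * ∫ ξ in (0 : ℝ)..x, G ξ * ξ * Real.exp (ξ ^ 2 / (4 * τ))

noncomputable def wker (τ : ℝ) (ξ : ℝ) : ℝ := ξ / (2 * τ) * Real.exp (ξ ^ 2 / (4 * τ))

lemma wker_cont (τ : ℝ) : Continuous (wker τ) := by unfold wker; fun_prop

lemma hasDerivAt_E (τ : ℝ) (hτ : 0 < τ) (ξ : ℝ) :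
    HasDerivAt (fun t : ℝ => Real.exp (t ^ 2 / (4 * τ))) (wker τ ξ) ξ := by
  have h1 : HasDerivAt (fun t : ℝ => t ^ 2 / (4 * τ)) (ξ / (2 * τ)) ξ := by
    have := (hasDerivAt_pow 2 ξ).div_const (4 * τ)
    refine this.congr_deriv ?_
    rw [div_eq_div_iff (by positivity) (by positivity)]
    norm_num
    ring
  have := h1.exp
  convert this using 1
  unfold wker; ring

lemma int_wker (τ : ℝ) (hτ : 0 < τ) (a b : ℝ) :
    ∫ ξ in a..b, wker τ ξ = Real.exp (b ^ 2 / (4 * τ)) - Real.exp (a ^ 2 / (4 * τ)) :=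
  intervalIntegral.integral_eq_sub_of_hasDerivAt (fun ξ _ => hasDerivAt_E τ hτ ξ)
    ((wker_cont τ).intervalIntegrable _ _)

lemma wPrim_eq (τ : ℝ) (G : ℝ → ℝ) (x : ℝ) :
    wPrim τ G x = G x * Real.exp (x ^ 2 / (4 * τ)) - G 0 - ∫ ξ in (0:ℝ)..x, G ξ * wker τ ξ := by
  unfold wPrim
  rw [← intervalIntegral.integral_const_mul]
  congr 1
  apply intervalIntegral.integral_congr
  intro ξ _
  unfold wker; ring


lemma boundedG (G : ℝ → ℝ) (hc : Continuous G) (hb : Tendsto G atBot (nhds (0:ℝ)))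
    (L : ℝ) (ht : Tendsto G atTop (nhds L)) : ∃ C, ∀ x, |G x| ≤ C := by
  obtain ⟨b, hbb⟩ := (ht.abs.eventually (eventually_le_nhds (lt_add_one |L|))).exists_forall_of_atTop
  obtain ⟨a, haa⟩ := ((hb.abs.eventually (eventually_le_nhds (by norm_num : |(0:ℝ)| < 1))).exists_forall_of_atBot)
  obtain ⟨C, hC⟩ := (isCompact_Icc (a := a) (b := b)).exists_bound_of_continuousOn hc.continuousOn
  refine ⟨max (max (|L| + 1) 1) C, fun x => ?_⟩
  rcases le_total x a with h | h
  · exact le_trans (haa x h) (le_trans (le_max_right _ _) (le_max_left _ _))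
  rcases le_total b x with h2 | h2
  · exact le_trans (hbb x h2) (le_trans (le_max_left _ _) (le_max_left _ _))
  · exact le_trans (le_of_eq (Real.norm_eq_abs _).symm |>.trans (hC x ⟨h, h2⟩)) (le_max_right _ _)

lemma normBc_bound (G : ℝ → ℝ) (C : ℝ) (hC : ∀ x, |G x| ≤ C) (a b : ℝ) :
    |G a - G b| ≤ normBc G := by
  have hbdd : BddAbove {r : ℝ | ∃ x y : ℝ, x < y ∧ r = |G x - G y|} := by
    refine ⟨2 * C, fun r hr => ?_⟩
    obtain ⟨x, y, _, rfl⟩ := hr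
    calc |G x - G y| ≤ |G x| + |G y| := abs_sub _ _
      _ ≤ C + C := add_le_add (hC x) (hC y)
      _ = 2 * C := by ring
  rcases lt_trichotomy a b with h | h | h
  · exact le_csSup hbdd ⟨a, b, h, rfl⟩
  · subst h; simp only [sub_self, abs_zero]
    have := le_csSup hbdd ⟨(0:ℝ), 1, one_pos, rfl⟩
    exact le_trans (abs_nonneg _) this
  · rw [abs_sub_comm]; exact le_csSup hbdd ⟨b, a, h, rfl⟩

lemma normBc_nonneg (G : ℝ → ℝ) (C : ℝ) (hC : ∀ x, |G x| ≤ C) : 0 ≤ normBc G :=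
  le_trans (abs_nonneg _) (normBc_bound G C hC 0 1)

lemma part1 (τ : ℝ) (hτ : 0 < τ) (G : ℝ → ℝ) (hGc : Continuous G) (M : ℝ)
    (hMb : ∀ a b : ℝ, |G a - G b| ≤ M) (x : ℝ) :
    |wPrim τ G x| ≤ M * Real.exp (x ^ 2 / (4 * τ)) := by
  have hM0 : 0 ≤ M := le_trans (abs_nonneg _) (hMb 0 0)
  have h2 : IntervalIntegrable (fun ξ => G ξ * wker τ ξ) volume 0 x :=
    (hGc.mul (wker_cont τ)).intervalIntegrable _ _
  have h1 : IntervalIntegrable (fun ξ => G x * wker τ ξ) volume 0 x :=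
    (continuous_const.mul (wker_cont τ)).intervalIntegrable _ _
  have hh : Continuous (fun ξ => (G x - G ξ) * wker τ ξ) :=
    ((continuous_const.sub hGc).mul (wker_cont τ))
  have hsplit : (∫ ξ in (0:ℝ)..x, (G x - G ξ) * wker τ ξ)
      = G x * (Real.exp (x ^ 2 / (4 * τ)) - 1) - ∫ ξ in (0:ℝ)..x, G ξ * wker τ ξ := by
    simp_rw [sub_mul]
    rw [intervalIntegral.integral_sub h1 h2, intervalIntegral.integral_const_mul,
      int_wker τ hτ]
    norm_num
  have key : wPrim τ G x
      = (G x - G 0) + ∫ ξ in (0:ℝ)..x, (G x - G ξ) * wker τ ξ := by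
    rw [wPrim_eq, hsplit]; ring
  have hE1 : (1:ℝ) ≤ Real.exp (x ^ 2 / (4 * τ)) := by
    rw [show (1:ℝ) = Real.exp 0 by simp]
    exact Real.exp_le_exp.mpr (by positivity)
  have hint : |∫ ξ in (0:ℝ)..x, (G x - G ξ) * wker τ ξ|
      ≤ M * (Real.exp (x ^ 2 / (4 * τ)) - 1) := by
    rcases le_total 0 x with hx | hx
    · calc |∫ ξ in (0:ℝ)..x, (G x - G ξ) * wker τ ξ|
          ≤ ∫ ξ in (0:ℝ)..x, |(G x - G ξ) * wker τ ξ| :=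
            intervalIntegral.abs_integral_le_integral_abs hx
        _ ≤ ∫ ξ in (0:ℝ)..x, M * wker τ ξ := by
            apply intervalIntegral.integral_mono_on hx (hh.abs.intervalIntegrable _ _)
              ((continuous_const.mul (wker_cont τ)).intervalIntegrable _ _)
            intro ξ hξ
            have hw : 0 ≤ wker τ ξ := by
              unfold wker
              exact mul_nonneg (div_nonneg hξ.1 (by positivity)) (Real.exp_nonneg _)
            rw [abs_mul, abs_of_nonneg hw]
            exact mul_le_mul_of_nonneg_right (hMb x ξ) hw
        _ = M * (Real.exp (x ^ 2 / (4 * τ)) - 1) := by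
            rw [intervalIntegral.integral_const_mul, int_wker τ hτ]; norm_num
    · rw [intervalIntegral.integral_symm, abs_neg]
      calc |∫ ξ in x..(0:ℝ), (G x - G ξ) * wker τ ξ|
          ≤ ∫ ξ in x..(0:ℝ), |(G x - G ξ) * wker τ ξ| :=
            intervalIntegral.abs_integral_le_integral_abs hx
        _ ≤ ∫ ξ in x..(0:ℝ), M * (-wker τ ξ) := by
            apply intervalIntegral.integral_mono_on hx (hh.abs.intervalIntegrable _ _)
              ((continuous_const.mul (wker_cont τ).neg).intervalIntegrable _ _)
            intro ξ hξ
            have hw : wker τ ξ ≤ 0 := by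
              unfold wker
              apply mul_nonpos_of_nonpos_of_nonneg
              · apply div_nonpos_of_nonpos_of_nonneg (le_trans hξ.2 (le_refl 0)) (by positivity)
              · positivity
            rw [abs_mul, abs_of_nonpos hw]
            exact mul_le_mul_of_nonneg_right (hMb x ξ) (neg_nonneg.mpr hw)
        _ = M * (Real.exp (x ^ 2 / (4 * τ)) - 1) := by
            simp_rw [mul_neg]
            rw [intervalIntegral.integral_neg, intervalIntegral.integral_const_mul,
              int_wker τ hτ]
            norm_num
            ring
  calc |wPrim τ G x| ≤ |G x - G 0| + |∫ ξ in (0:ℝ)..x, (G x - G ξ) * wker τ ξ| := by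
        rw [key]; exact abs_add_le _ _
    _ ≤ M + M * (Real.exp (x ^ 2 / (4 * τ)) - 1) := add_le_add (hMb x 0) hint
    _ = M * Real.exp (x ^ 2 / (4 * τ)) := by ring

lemma tendA (τ : ℝ) (hτ : 0 < τ) (φ : ℝ → ℝ) (hc : Continuous φ)
    (h0 : Tendsto φ atTop (nhds (0:ℝ))) :
    Tendsto (fun x => Real.exp (-(x ^ 2 / (4 * τ))) * ∫ ξ in (0:ℝ)..x, φ ξ * wker τ ξ)
      atTop (nhds 0) := by
  have hφw : Continuous (fun ξ => φ ξ * wker τ ξ) := hc.mul (wker_cont τ)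
  rw [NormedAddCommGroup.tendsto_nhds_zero]
  intro ε hε
  obtain ⟨N, hN⟩ := Metric.tendsto_atTop.mp h0 (ε/2) (by positivity)
  set A := max N 0 with hA
  have hA0 : (0:ℝ) ≤ A := le_max_right _ _
  have hAb : ∀ ξ ≥ A, |φ ξ| ≤ ε/2 := fun ξ hξ => by
    have := hN ξ (le_trans (le_max_left _ _) hξ)
    rw [Real.dist_eq, sub_zero] at this
    exact this.le
  set C := |∫ ξ in (0:ℝ)..A, φ ξ * wker τ ξ| with hC
  have hq : Tendsto (fun x : ℝ => x ^ 2 / (4 * τ)) atTop atTop := by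
    apply Tendsto.atTop_div_const (by positivity)
    exact tendsto_pow_atTop (by norm_num)
  have hten : Tendsto (fun x : ℝ => Real.exp (-(x ^ 2 / (4 * τ))) * C) atTop (nhds 0) := by
    have := (Real.tendsto_exp_neg_atTop_nhds_zero.comp hq).mul_const C
    simpa using this
  have hev : ∀ᶠ x in atTop, Real.exp (-(x ^ 2 / (4 * τ))) * C < ε/2 :=
    hten.eventually (eventually_lt_nhds (by positivity))
  filter_upwards [hev, eventually_ge_atTop A] with x hx1 hx2
  have hsplit : ∫ ξ in (0:ℝ)..x, φ ξ * wker τ ξ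
      = (∫ ξ in (0:ℝ)..A, φ ξ * wker τ ξ) + ∫ ξ in A..x, φ ξ * wker τ ξ :=
    (intervalIntegral.integral_add_adjacent_intervals (hφw.intervalIntegrable _ _)
      (hφw.intervalIntegrable _ _)).symm
  have htail : |∫ ξ in A..x, φ ξ * wker τ ξ|
      ≤ ε/2 * (Real.exp (x ^ 2 / (4 * τ)) - Real.exp (A ^ 2 / (4 * τ))) := by
    calc |∫ ξ in A..x, φ ξ * wker τ ξ| ≤ ∫ ξ in A..x, |φ ξ * wker τ ξ| :=
          intervalIntegral.abs_integral_le_integral_abs hx2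
      _ ≤ ∫ ξ in A..x, ε/2 * wker τ ξ := by
          apply intervalIntegral.integral_mono_on hx2 (hφw.abs.intervalIntegrable _ _)
            ((continuous_const.mul (wker_cont τ)).intervalIntegrable _ _)
          intro ξ hξ
          have hξ0 : 0 ≤ ξ := le_trans hA0 hξ.1
          have hw : 0 ≤ wker τ ξ := by
            unfold wker
            exact mul_nonneg (div_nonneg hξ0 (by positivity)) (Real.exp_nonneg _)
          rw [abs_mul, abs_of_nonneg hw]
          exact mul_le_mul_of_nonneg_right (hAb ξ hξ.1) hw
      _ = ε/2 * (Real.exp (x ^ 2 / (4 * τ)) - Real.exp (A ^ 2 / (4 * τ))) := by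
          rw [intervalIntegral.integral_const_mul, int_wker τ hτ]
  have hexp_pos : (0:ℝ) < Real.exp (-(x ^ 2 / (4 * τ))) := Real.exp_pos _
  have hEx : Real.exp (-(x ^ 2 / (4 * τ))) * Real.exp (x ^ 2 / (4 * τ)) = 1 := by
    rw [← Real.exp_add]; simp
  calc ‖Real.exp (-(x ^ 2 / (4 * τ))) * ∫ ξ in (0:ℝ)..x, φ ξ * wker τ ξ‖
      = Real.exp (-(x ^ 2 / (4 * τ))) * |∫ ξ in (0:ℝ)..x, φ ξ * wker τ ξ| := by
        rw [Real.norm_eq_abs, abs_mul, abs_of_pos hexp_pos]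
    _ ≤ Real.exp (-(x ^ 2 / (4 * τ))) * (C + ε/2 * (Real.exp (x ^ 2 / (4 * τ)) - Real.exp (A ^ 2 / (4 * τ)))) := by
        apply mul_le_mul_of_nonneg_left _ hexp_pos.le
        rw [hsplit]
        exact le_trans (abs_add_le _ _) (add_le_add_right htail _)
    _ = Real.exp (-(x ^ 2 / (4 * τ))) * C
        + ε/2 * (Real.exp (-(x ^ 2 / (4 * τ))) * (Real.exp (x ^ 2 / (4 * τ)) - Real.exp (A ^ 2 / (4 * τ)))) := by
        ring
    _ ≤ Real.exp (-(x ^ 2 / (4 * τ))) * C + ε/2 * 1 := by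
        apply add_le_add_right
        apply mul_le_mul_of_nonneg_left _ (by positivity)
        rw [← hEx]
        apply mul_le_mul_of_nonneg_left _ hexp_pos.le
        simp [Real.exp_nonneg]
    _ < ε/2 + ε/2 * 1 := by
        apply add_lt_add_left hx1
    _ = ε := by ring

lemma tendB (τ : ℝ) (hτ : 0 < τ) (φ : ℝ → ℝ) (hc : Continuous φ)
    (h0 : Tendsto φ atBot (nhds (0:ℝ))) :
    Tendsto (fun x => Real.exp (-(x ^ 2 / (4 * τ))) * ∫ ξ in (0:ℝ)..x, φ ξ * wker τ ξ)
      atBot (nhds 0) := by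
  have hodd : ∀ ξ : ℝ, wker τ (-ξ) = -wker τ ξ := by
    intro ξ; unfold wker; rw [neg_pow]; ring_nf
  have hsub : ∀ x : ℝ, (∫ ξ in (0:ℝ)..(-x), φ ξ * wker τ ξ)
      = ∫ ξ in (0:ℝ)..x, φ (-ξ) * wker τ ξ := by
    intro x
    have := intervalIntegral.integral_comp_neg (a := (0:ℝ)) (b := x)
      (fun ξ => φ ξ * wker τ ξ)
    rw [neg_zero] at this
    rw [intervalIntegral.integral_symm, ← this, ← intervalIntegral.integral_neg]
    apply intervalIntegral.integral_congr
    intro ξ _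
    simp only [hodd ξ]
    ring
  have hψ : Tendsto (fun ξ : ℝ => φ (-ξ)) atTop (nhds 0) :=
    h0.comp tendsto_neg_atTop_atBot
  have hA := tendA τ hτ (fun ξ => φ (-ξ)) (hc.comp continuous_neg) hψ
  have key : Tendsto ((fun x => Real.exp (-(x ^ 2 / (4 * τ))) *
      ∫ ξ in (0:ℝ)..x, φ ξ * wker τ ξ) ∘ Neg.neg) atTop (nhds 0) := by
    apply hA.congr
    intro x
    simp only [Function.comp_apply, neg_pow, Even.neg_pow (by norm_num : Even 2)]
    rw [hsub]
  have := key.comp tendsto_neg_atBot_atTop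
  apply this.congr
  intro x
  simp [Function.comp_apply]

/-- `|F(x)| ≤ ‖G‖'_∞ e^{x²/(4τ)}` for all `x`, and `F(x) e^{−x²/(4τ)} → 0` as `|x| → ∞`. -/
theorem stmt13 (τ : ℝ) (hτ : 0 < τ) (G : ℝ → ℝ) (hG : memBc G) :
    (∀ x : ℝ, |wPrim τ G x| ≤ normBc G * Real.exp (x ^ 2 / (4 * τ))) ∧
    Tendsto (fun x : ℝ => wPrim τ G x * Real.exp (-x ^ 2 / (4 * τ))) atTop (nhds 0) ∧
    Tendsto (fun x : ℝ => wPrim τ G x * Real.exp (-x ^ 2 / (4 * τ))) atBot (nhds 0) := by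
  obtain ⟨hGc, hGb, L, hGt⟩ := hG
  obtain ⟨C, hC⟩ := boundedG G hGc hGb L hGt
  have hMb := normBc_bound G C hC
  have hEe : ∀ x : ℝ, Real.exp (-(x ^ 2 / (4 * τ))) * Real.exp (x ^ 2 / (4 * τ)) = 1 := by
    intro x; rw [← Real.exp_add]; simp
  have hq : Tendsto (fun x : ℝ => x ^ 2 / (4 * τ)) atTop atTop := by
    apply Tendsto.atTop_div_const (by positivity)
    exact tendsto_pow_atTop (by norm_num)
  have hqB : Tendsto (fun x : ℝ => x ^ 2 / (4 * τ)) atBot atTop := by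
    apply Tendsto.atTop_div_const (by positivity)
    have : Tendsto (fun x : ℝ => |x| ^ 2) atBot atTop :=
      (tendsto_pow_atTop (by norm_num)).comp tendsto_abs_atBot_atTop
    simpa [sq_abs] using this
  refine ⟨fun x => part1 τ hτ G hGc (normBc G) hMb x, ?_, ?_⟩
  · have hid : ∀ x : ℝ, wPrim τ G x * Real.exp (-x ^ 2 / (4 * τ))
        = (G x - L) + (L - G 0) * Real.exp (-(x ^ 2 / (4 * τ)))
          - Real.exp (-(x ^ 2 / (4 * τ))) * ∫ ξ in (0:ℝ)..x, (G ξ - L) * wker τ ξ := by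
      intro x
      have hI : (∫ ξ in (0:ℝ)..x, (G ξ - L) * wker τ ξ)
          = (∫ ξ in (0:ℝ)..x, G ξ * wker τ ξ)
            - L * (Real.exp (x ^ 2 / (4 * τ)) - 1) := by
        simp_rw [sub_mul]
        rw [intervalIntegral.integral_sub (f := fun ξ => G ξ * wker τ ξ) (g := fun ξ => L * wker τ ξ) ((hGc.mul (wker_cont τ)).intervalIntegrable _ _)
          ((continuous_const.mul (wker_cont τ)).intervalIntegrable _ _),
          intervalIntegral.integral_const_mul, int_wker τ hτ]
        norm_num
      rw [wPrim_eq, hI, neg_div]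
      linear_combination (G x - L) * hEe x
    have t1 : Tendsto (fun x => G x - L) atTop (nhds (0:ℝ)) := by
      simpa using hGt.sub_const L
    have t2 : Tendsto (fun x : ℝ => (L - G 0) * Real.exp (-(x ^ 2 / (4 * τ)))) atTop
        (nhds (0:ℝ)) := by
      have := (Real.tendsto_exp_neg_atTop_nhds_zero.comp hq).const_mul (L - G 0)
      simpa using this
    have t3 := tendA τ hτ (fun ξ => G ξ - L) (hGc.sub continuous_const) t1
    have tall := (t1.add t2).sub t3
    rw [show (0:ℝ) + 0 - 0 = 0 by ring] at tall
    exact Tendsto.congr (fun x => (hid x).symm) tall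
  · have hid : ∀ x : ℝ, wPrim τ G x * Real.exp (-x ^ 2 / (4 * τ))
        = G x - G 0 * Real.exp (-(x ^ 2 / (4 * τ)))
          - Real.exp (-(x ^ 2 / (4 * τ))) * ∫ ξ in (0:ℝ)..x, G ξ * wker τ ξ := by
      intro x
      rw [wPrim_eq, neg_div]
      linear_combination (G x) * hEe x
    have t2 : Tendsto (fun x : ℝ => G 0 * Real.exp (-(x ^ 2 / (4 * τ)))) atBot
        (nhds (0:ℝ)) := by
      have := (Real.tendsto_exp_neg_atTop_nhds_zero.comp hqB).const_mul (G 0)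
      simpa using this
    have t3 := tendB τ hτ G hGc hGb
    have tall := (hGb.sub t2).sub t3
    rw [show (0:ℝ) - 0 - 0 = 0 by ring] at tall
    exact Tendsto.congr (fun x => (hid x).symm) tall
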